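/- For all positive integers j and k with k ≤ j, one has Σ_{j₁+…+j_k = j, j₁,…,j_k ≥ 1} j₁!·j₂!·⋯·j_k! ≤ 4^{k−1}·(j−k+1)!, where the sum runs over all k-tuples of positive integers summing to j. -/

import Mathlib

open Finset

lemma sum_tuple_succ {M : Type*} [AddCommMonoid M] (k j : ℕ) (F : (Fin (k+1) → ℕ) → M) :
    ∑ f ∈ Finset.Nat.antidiagonalTuple (k+1) j, F f
      = ∑ p ∈ Finset.HasAntidiagonal.antidiagonal j,
          ∑ g ∈ Finset.Nat.antidiagonalTuple k p.2, F (Fin.cons p.1 g) := by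
  rw [Finset.sum_sigma']
  refine Finset.sum_nbij' (fun f => ⟨(f 0, ∑ i : Fin k, f i.succ), Fin.tail f⟩)
    (fun x => Fin.cons x.1.1 x.2) ?_ ?_ ?_ ?_ ?_
  · intro f hf
    simp only [Finset.Nat.mem_antidiagonalTuple] at hf
    simp only [Finset.mem_sigma, Finset.HasAntidiagonal.mem_antidiagonal,
      Finset.Nat.mem_antidiagonalTuple, Fin.tail]
    exact ⟨by rw [← hf, Fin.sum_univ_succ], trivial⟩
  · rintro ⟨⟨a, b⟩, g⟩ hx
    simp only [Finset.mem_sigma, Finset.HasAntidiagonal.mem_antidiagonal,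
      Finset.Nat.mem_antidiagonalTuple] at hx ⊢
    rw [Fin.sum_univ_succ, Fin.cons_zero]
    have : ∀ i : Fin k, (Fin.cons a g : Fin (k+1) → ℕ) i.succ = g i := fun i => rfl
    simp only [this, hx.2, hx.1]
  · intro f hf
    simp [Fin.cons_self_tail]
  · rintro ⟨⟨a, b⟩, g⟩ hx
    simp only [Finset.mem_sigma, Finset.HasAntidiagonal.mem_antidiagonal,
      Finset.Nat.mem_antidiagonalTuple] at hx
    have h1 : (Fin.cons a g : Fin (k+1) → ℕ) 0 = a := rfl
    have h2 : ∀ i : Fin k, (Fin.cons a g : Fin (k+1) → ℕ) i.succ = g i := fun i => rfl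
    simp only [h1, h2, Fin.tail_cons, Sigma.mk.inj_iff, Prod.mk.injEq, heq_eq_eq]
    exact ⟨⟨trivial, hx.2⟩, trivial⟩
  · intro f hf
    rw [Fin.cons_self_tail]

/-- The filtered sum. -/
def S (k j : ℕ) : ℕ :=
  ∑ f ∈ (Finset.Nat.antidiagonalTuple k j).filter (fun f => ∀ i, 1 ≤ f i),
    ∏ i, (f i).factorial

lemma S_eq (k j : ℕ) : S k j = ∑ f ∈ Finset.Nat.antidiagonalTuple k j,
    (if ∀ i, 1 ≤ f i then ∏ i, (f i).factorial else 0) := by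
  rw [S, Finset.sum_filter]

lemma S_eq_zero (k j : ℕ) (h : j < k) : S k j = 0 := by
  rw [S_eq]
  apply Finset.sum_eq_zero
  intro f hf
  rw [Finset.Nat.mem_antidiagonalTuple] at hf
  rw [if_neg]
  intro hall
  have : k ≤ j := by
    calc k = ∑ _i : Fin k, 1 := by simp
    _ ≤ ∑ i, f i := Finset.sum_le_sum fun i _ => hall i
    _ = j := hf
  omega

lemma S_one (j : ℕ) (hj : 1 ≤ j) : S 1 j = j.factorial := by
  rw [S_eq, Finset.Nat.antidiagonalTuple_one, Finset.sum_singleton, if_pos]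
  · simp
  · intro i
    simpa [Fin.fin_one_eq_zero i] using hj

lemma S_rec (k j : ℕ) : S (k+1) j
    = ∑ p ∈ Finset.HasAntidiagonal.antidiagonal j,
        (if 1 ≤ p.1 then p.1.factorial * S k p.2 else 0) := by
  rw [S_eq, sum_tuple_succ]
  apply Finset.sum_congr rfl
  rintro ⟨a, b⟩ _
  have hcond : ∀ g : Fin k → ℕ,
      ((∀ i : Fin (k+1), 1 ≤ (Fin.cons a g : Fin (k+1) → ℕ) i) ↔ (1 ≤ a ∧ ∀ i : Fin k, 1 ≤ g i)) := by
    intro g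
    constructor
    · intro h
      exact ⟨h 0, fun i => h i.succ⟩
    · rintro ⟨h1, h2⟩ i
      refine Fin.cases ?_ ?_ i
      · exact h1
      · intro i; exact h2 i
  have hprod : ∀ g : Fin k → ℕ, ∏ i : Fin (k+1), ((Fin.cons a g : Fin (k+1) → ℕ) i).factorial
      = a.factorial * ∏ i : Fin k, (g i).factorial := by
    intro g; rw [Fin.prod_univ_succ]; rfl
  by_cases h1 : 1 ≤ a
  · simp only [if_pos h1, S_eq, Finset.mul_sum]
    apply Finset.sum_congr rfl
    intro g _
    rw [hprod g]
    by_cases h2 : ∀ i : Fin k, 1 ≤ g i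
    · rw [if_pos ((hcond g).2 ⟨h1, h2⟩), if_pos h2]
    · rw [if_neg (fun h => h2 ((hcond g).1 h).2), if_neg h2, mul_zero]
  · simp only [if_neg h1]
    apply Finset.sum_eq_zero
    intro g _
    exact if_neg (fun h => h1 ((hcond g).1 h).1)

lemma fac_mul_fac (a b : ℕ) (ha : 2 ≤ a) (hb : 2 ≤ b) :
    a.factorial * b.factorial ≤ 2 * (a + b - 2).factorial := by
  induction a, ha using Nat.le_induction with
  | base =>
      have : 2 + b - 2 = b := by omega
      rw [this]
      simp [Nat.factorial]
  | succ a ha ih =>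
      have h1 : a + 1 + b - 2 = (a + b - 2) + 1 := by omega
      rw [h1, Nat.factorial_succ, Nat.factorial_succ]
      calc (a + 1) * a.factorial * b.factorial
          = (a + 1) * (a.factorial * b.factorial) := by ring
        _ ≤ (a + 1) * (2 * (a + b - 2).factorial) := Nat.mul_le_mul_left _ ih
        _ ≤ (a + b - 2 + 1) * (2 * (a + b - 2).factorial) := by
            apply Nat.mul_le_mul_right; omega
        _ = 2 * ((a + b - 2 + 1) * (a + b - 2).factorial) := by ring

lemma key (n : ℕ) (hn : 1 ≤ n) :
    ∑ m ∈ Finset.Icc 1 n, m.factorial * (n + 1 - m).factorial ≤ 4 * n.factorial := by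
  rcases Nat.lt_or_ge n 2 with h | h
  · interval_cases n
    · simp [Nat.factorial]
  · have hset : Finset.Icc 1 n = insert 1 (insert n (Finset.Icc 2 (n-1))) := by
      ext x
      simp only [Finset.mem_Icc, Finset.mem_insert]
      omega
    rw [hset, Finset.sum_insert, Finset.sum_insert]
    · have hmid : ∑ m ∈ Finset.Icc 2 (n-1), m.factorial * (n + 1 - m).factorial
          ≤ (n - 2) * (2 * (n - 1).factorial) := by
        calc ∑ m ∈ Finset.Icc 2 (n-1), m.factorial * (n + 1 - m).factorial
            ≤ (Finset.Icc 2 (n-1)).card * (2 * (n - 1).factorial) := by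
              apply Finset.sum_le_card_nsmul
              intro m hm
              rw [Finset.mem_Icc] at hm
              have := fac_mul_fac m (n + 1 - m) hm.1 (by omega)
              have heq : m + (n + 1 - m) - 2 = n - 1 := by omega
              rwa [heq] at this
          _ = (n - 2) * (2 * (n - 1).factorial) := by
              have hc : (Finset.Icc 2 (n-1)).card = n - 2 := by
                rw [Nat.card_Icc]; omega
              rw [hc]
      have h1 : Nat.factorial 1 * (n + 1 - 1).factorial = n.factorial := by
        simp [Nat.factorial]
      have h2 : n.factorial * (n + 1 - n).factorial = n.factorial := by
        have : n + 1 - n = 1 := by omega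
        simp [this, Nat.factorial]
      have hfac : n.factorial = n * (n - 1).factorial := by
        conv_lhs => rw [show n = (n - 1) + 1 by omega]
        rw [Nat.factorial_succ]
        congr 1; omega
      rw [h1, h2]
      have : (n - 2) * (2 * (n - 1).factorial) ≤ 2 * n.factorial := by
        rw [hfac]
        calc (n - 2) * (2 * (n - 1).factorial) = 2 * ((n-2) * (n - 1).factorial) := by ring
          _ ≤ 2 * (n * (n - 1).factorial) := by
              apply Nat.mul_le_mul_left
              apply Nat.mul_le_mul_right
              omega
      omega
    · simp only [Finset.mem_Icc]
      omega
    · simp only [Finset.mem_insert, Finset.mem_Icc]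
      omega

lemma main_ind (k : ℕ) (hk : 1 ≤ k) : ∀ j, k ≤ j → S k j ≤ 4 ^ (k - 1) * (j - k + 1).factorial := by
  induction k, hk using Nat.le_induction with
  | base =>
      intro j hj
      rw [S_one j hj]
      simp
      rw [show j - 1 + 1 = j by omega]
  | succ k hk ih =>
      intro j hj
      rw [S_rec]
      set n := j - k with hn
      have hstep : ∀ p ∈ Finset.HasAntidiagonal.antidiagonal j,
          (if 1 ≤ p.1 then p.1.factorial * S k p.2 else 0)
            ≤ (if 1 ≤ p.1 ∧ p.1 ≤ n then 4 ^ (k-1) * (p.1.factorial * (n + 1 - p.1).factorial) else 0) := by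
        rintro ⟨a, b⟩ hp
        rw [Finset.HasAntidiagonal.mem_antidiagonal] at hp
        simp only
        by_cases h1 : 1 ≤ a
        · rw [if_pos h1]
          by_cases h2 : a ≤ n
          · rw [if_pos ⟨h1, h2⟩]
            have hb : k ≤ b := by omega
            have := ih b hb
            calc a.factorial * S k b ≤ a.factorial * (4 ^ (k-1) * (b - k + 1).factorial) :=
                Nat.mul_le_mul_left _ this
              _ = 4 ^ (k-1) * (a.factorial * (n + 1 - a).factorial) := by
                  rw [show b - k + 1 = n + 1 - a by omega]; ring
          · rw [if_neg (fun h => h2 h.2)]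
            have : b < k := by omega
            rw [S_eq_zero k b this, mul_zero]
        · rw [if_neg h1, if_neg (fun h => h1 h.1)]
      calc ∑ p ∈ Finset.HasAntidiagonal.antidiagonal j, (if 1 ≤ p.1 then p.1.factorial * S k p.2 else 0)
          ≤ ∑ p ∈ Finset.HasAntidiagonal.antidiagonal j,
            (if 1 ≤ p.1 ∧ p.1 ≤ n then 4 ^ (k-1) * (p.1.factorial * (n + 1 - p.1).factorial) else 0) :=
            Finset.sum_le_sum hstep
        _ = ∑ m ∈ Finset.range (j+1),
            (if 1 ≤ m ∧ m ≤ n then 4 ^ (k-1) * (m.factorial * (n + 1 - m).factorial) else 0) := by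
            rw [Finset.Nat.sum_antidiagonal_eq_sum_range_succ_mk]
        _ = ∑ m ∈ Finset.Icc 1 n, 4 ^ (k-1) * (m.factorial * (n + 1 - m).factorial) := by
            rw [← Finset.sum_filter]
            apply Finset.sum_congr
            · ext x
              simp only [Finset.mem_filter, Finset.mem_range, Finset.mem_Icc]
              omega
            · intros; rfl
        _ = 4 ^ (k-1) * ∑ m ∈ Finset.Icc 1 n, m.factorial * (n + 1 - m).factorial := by
            rw [Finset.mul_sum]
        _ ≤ 4 ^ (k-1) * (4 * n.factorial) := Nat.mul_le_mul_left _ (key n (by omega))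
        _ = 4 ^ (k+1-1) * (j - (k+1) + 1).factorial := by
            rw [show k + 1 - 1 = k by omega, show j - (k+1) + 1 = n by omega,
              show (4:ℕ) ^ k = 4 ^ (k-1) * 4 by rw [← pow_succ]; congr 1; omega]
            ring

theorem stmt7 (j k : ℕ) (hk : 1 ≤ k) (hkj : k ≤ j) :
    ∑ f ∈ (Finset.Nat.antidiagonalTuple k j).filter (fun f => ∀ i, 1 ≤ f i),
        ∏ i, (f i).factorial ≤ 4 ^ (k - 1) * (j - k + 1).factorial := by
  exact main_ind k hk j hkj
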